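/- Let n ≥ 3 and let G be an n-vertex graph that is a 10-expander. Then for every pair e of distinct vertices of G, the number of e-boosters for G is at least n²/10⁴. -/

import Mathlib

open SimpleGraph List

set_option linter.unusedSectionVars false
set_option linter.unusedVariables false

/-- The external neighbourhood of a vertex set `A` in a graph `G`. -/
def extNbhd {V : Type*} (G : SimpleGraph V) (A : Set V) : Set V :=
  {v | v ∉ A ∧ ∃ a ∈ A, G.Adj a v}

/-- A graph on `n` vertices is a 10-expander if it is connected and every vertex set `A`
with `|A| ≤ n/20` satisfies `|N(A)| ≥ 10|A|`. -/
def IsTenExpander {V : Type*} [Fintype V] (G : SimpleGraph V) : Prop :=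
  G.Connected ∧ ∀ A : Set V, (A.ncard : ℝ) ≤ (Fintype.card V : ℝ) / 20 →
    10 * A.ncard ≤ (extNbhd G A).ncard

/-- `f` is an `e`-booster for `G`: either `G + e + f` has a longer path containing `e`
than `G + e` does, or `G + e + f` has a Hamilton cycle through `e`. -/
def IsBooster {V : Type*} [DecidableEq V] (G : SimpleGraph V) (e f : Sym2 V) : Prop :=
  (∃ (u v : V) (w : (G ⊔ fromEdgeSet {e, f}).Walk u v), w.IsPath ∧ e ∈ w.edges ∧
      ∀ (x y : V) (w' : (G ⊔ fromEdgeSet {e}).Walk x y),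
        w'.IsPath → e ∈ w'.edges → w'.length < w.length) ∨
  (∃ (u : V) (w : (G ⊔ fromEdgeSet {e, f}).Walk u u), w.IsHamiltonianCycle ∧ e ∈ w.edges)

variable {V : Type*}

/-- Edges (as `Sym2`s) of a list of vertices. -/
def ledges : List V → List (Sym2 V)
  | [] => []
  | [_] => []
  | a :: b :: t => s(a, b) :: ledges (b :: t)

@[simp] lemma ledges_nil : ledges ([] : List V) = [] := rfl
@[simp] lemma ledges_single (a : V) : ledges [a] = [] := rfl
@[simp] lemma ledges_cons_cons (a b : V) (t : List V) :
    ledges (a :: b :: t) = s(a, b) :: ledges (b :: t) := rfl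

lemma ledges_cons_of_ne_nil (a : V) {l : List V} (h : l ≠ []) :
    ledges (a :: l) = s(a, l.head h) :: ledges l := by
  cases l with
  | nil => exact absurd rfl h
  | cons b t => rfl

lemma ledges_append_cons (A : List V) (v : V) (B : List V) :
    ledges (A ++ v :: B) = ledges (A ++ [v]) ++ ledges (v :: B) := by
  induction A with
  | nil => cases B <;> simp
  | cons a A ih =>
      cases A with
      | nil => cases B <;> simp
      | cons a' A' => simpa using ih

lemma ledges_concat {l : List V} (h : l ≠ []) (v : V) :
    ledges (l ++ [v]) = ledges l ++ [s(l.getLast h, v)] := by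
  induction l with
  | nil => exact absurd rfl h
  | cons a t ih =>
      cases t with
      | nil => simp
      | cons b t' =>
          simp only [List.cons_append, ledges_cons_cons]
          rw [← List.cons_append, ih (by simp)]
          simp [List.getLast_cons]

lemma ledges_reverse (l : List V) : ledges l.reverse = (ledges l).reverse := by
  induction l with
  | nil => simp
  | cons a t ih =>
      cases t with
      | nil => simp
      | cons b t' =>
          rw [ledges_cons_cons, reverse_cons (a := a), ledges_concat (by simp) a, ih]
          simp [Sym2.eq_swap]

lemma mem_ledges_cons {g : Sym2 V} {a : V} {l : List V} (h : g ∈ ledges l) :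
    g ∈ ledges (a :: l) := by
  cases l with
  | nil => simp at h
  | cons b t => rw [ledges_cons_cons]; exact List.mem_cons_of_mem _ h

lemma mem_ledges_append_left {g : Sym2 V} {A : List V} (B : List V) (h : g ∈ ledges A) :
    g ∈ ledges (A ++ B) := by
  induction A with
  | nil => simp at h
  | cons a t ih =>
      cases t with
      | nil => simp at h
      | cons b t' =>
          rw [cons_append, cons_append, ledges_cons_cons] at *
          rcases List.mem_cons.1 h with h | h
          · exact List.mem_cons.2 (Or.inl h)
          · exact List.mem_cons.2 (Or.inr (by simpa using ih h))

lemma mem_ledges_append_right {g : Sym2 V} (A : List V) {B : List V} (h : g ∈ ledges B) :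
    g ∈ ledges (A ++ B) := by
  induction A with
  | nil => simpa
  | cons a t ih =>
      have : g ∈ ledges (t ++ B) := ih
      have := mem_ledges_cons (a := a) this
      simpa using this

lemma mem_of_mem_ledges {g : Sym2 V} {l : List V} (h : g ∈ ledges l) {x : V} (hx : x ∈ g) :
    x ∈ l := by
  induction l with
  | nil => simp at h
  | cons a t ih =>
      cases t with
      | nil => simp at h
      | cons b t' =>
          rw [ledges_cons_cons] at h
          rcases List.mem_cons.1 h with h | h
          · subst h
            rcases Sym2.mem_iff.1 hx with rfl | rfl
            · exact List.mem_cons_self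
            · exact List.mem_cons_of_mem _ (List.mem_cons_self)
          · exact List.mem_cons_of_mem _ (ih h)

section chain
variable {r : V → V → Prop}

lemma chain'_flip_of_symm (hr : Symmetric r) {l : List V} (h : l.Chain' r) :
    l.Chain' (flip r) :=
  h.imp fun _ _ hab => hr hab

/-- The key chain fact for a Pósa rotation. -/
lemma chain'_rotation (hr : Symmetric r) {l₁ l₂ : List V} {v : V} (h2 : l₂ ≠ [])
    (hc : List.Chain' r (l₁ ++ v :: l₂)) (hb : r (l₂.getLast h2) v) :
    List.Chain' r (l₁ ++ v :: l₂.reverse) := by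
  obtain ⟨hA, hB, hj⟩ := List.isChain_append.1 hc
  refine List.isChain_append.2 ⟨hA, ?_, ?_⟩
  · have hrev : List.Chain' r l₂.reverse :=
      List.isChain_reverse.2 (chain'_flip_of_symm hr hB.tail)
    refine (List.isChain_cons.2 ⟨?_, hrev⟩)
    intro y hy
    rw [List.head?_reverse, List.getLast?_eq_getLast h2] at hy
    cases hy
    exact hr hb
  · intro x hx y hy
    simp only [List.head?_cons, Option.mem_some_iff] at hy
    subst hy
    exact hj x hx v (by simp)

lemma mem_ledges_split {l₁ l₂ : List V} {v : V} (h2 : l₂ ≠ []) (g : Sym2 V) :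
    g ∈ ledges (l₁ ++ v :: l₂) ↔
      g ∈ ledges (l₁ ++ [v]) ∨ g = s(v, l₂.head h2) ∨ g ∈ ledges l₂ := by
  rw [ledges_append_cons, List.mem_append, ledges_cons_of_ne_nil _ h2, List.mem_cons]

lemma mem_ledges_split_rev {l₁ l₂ : List V} {v : V} (h2 : l₂ ≠ []) (g : Sym2 V) :
    g ∈ ledges (l₁ ++ v :: l₂.reverse) ↔
      g ∈ ledges (l₁ ++ [v]) ∨ g = s(v, l₂.getLast h2) ∨ g ∈ ledges l₂ := by
  have h2' : l₂.reverse ≠ [] := by simpa using h2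
  rw [mem_ledges_split h2' g]
  have hh : l₂.reverse.head h2' = l₂.getLast h2 := by
    rw [← Option.some_inj, ← List.head?_eq_head, List.head?_reverse,
      List.getLast?_eq_getLast h2]
  rw [hh, ledges_reverse, List.mem_reverse]

end chain

section bridge
variable {G : SimpleGraph V}

lemma walk_support_head {u v : V} (w : G.Walk u v) :
    w.support.head w.support_ne_nil = u := by
  rw [← Option.some_inj, ← List.head?_eq_head, w.support_eq_cons]
  rfl

lemma walk_edges_eq_ledges {u v : V} (w : G.Walk u v) : w.edges = ledges w.support := by
  induction w with
  | nil => rfl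
  | cons h p ih =>
      rw [SimpleGraph.Walk.edges_cons, SimpleGraph.Walk.support_cons, ih,
        ledges_cons_of_ne_nil _ p.support_ne_nil]
      rw [walk_support_head]

lemma exists_walk_of_chain :
    ∀ (l : List V), l.Chain' G.Adj → l ≠ [] →
      ∃ (a b : V) (w : G.Walk a b), w.support = l := by
  intro l
  induction l with
  | nil => intro _ h; exact absurd rfl h
  | cons a t ih =>
      intro hc _
      cases t with
      | nil => exact ⟨a, a, SimpleGraph.Walk.nil, rfl⟩
      | cons b t' =>
          obtain ⟨x, y, w, hw⟩ := ih (List.isChain_cons_cons.1 hc).2 (by simp)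
          have hx : x = b := by
            have := w.support_eq_cons
            rw [hw] at this
            exact ((List.cons.injEq _ _ _ _ ▸ this).1).symm
          subst hx
          exact ⟨a, y, SimpleGraph.Walk.cons (List.isChain_cons_cons.1 hc).1 w, by
            rw [SimpleGraph.Walk.support_cons, hw]⟩

lemma head_of_support_eq {a b : V} {w : G.Walk a b} {l : List V} (hw : w.support = l)
    (h : l ≠ []) : l.head h = a := by
  rw [← Option.some_inj, ← List.head?_eq_head, ← hw, w.support_eq_cons]
  rfl

lemma getLast_of_support_eq {a b : V} {w : G.Walk a b} {l : List V} (hw : w.support = l)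
    (h : l ≠ []) : l.getLast h = b := by
  subst hw
  exact w.getLast_support

end bridge

section nbr
variable [DecidableEq V] [Fintype V]

/-- Neighbours of `s` along the list `l`. -/
def nbrF (l : List V) (s : V) : Finset V := Finset.univ.filter (fun y => s(s, y) ∈ ledges l)

lemma mem_nbrF {l : List V} {s y : V} : y ∈ nbrF l s ↔ s(s, y) ∈ ledges l := by
  simp [nbrF]

lemma nbrF_of_not_mem {l : List V} {s : V} (h : s ∉ l) : nbrF l s = ∅ := by
  ext y
  simp only [mem_nbrF, Finset.notMem_empty, iff_false]
  intro hm
  exact h (mem_of_mem_ledges hm (by simp))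

lemma nbrF_card_le : ∀ (l : List V), l.Nodup → ∀ s : V,
    (nbrF l s).card ≤ 2 ∧ ∀ h : l ≠ [], s = l.head h → (nbrF l s).card ≤ 1 := by
  intro l
  induction l with
  | nil => intro _ s; constructor
           · simp [nbrF]
           · intro h; exact absurd rfl h
  | cons a t ih =>
      intro hnd s
      cases t with
      | nil =>
          constructor
          · simp [nbrF]
          · intro _ _; simp [nbrF]
      | cons b t' =>
          have hnd' : (b :: t').Nodup := hnd.of_cons
          have hanotin : a ∉ b :: t' := (List.nodup_cons.1 hnd).1
          have hab : a ≠ b := fun h => hanotin (h ▸ List.mem_cons_self)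
          have hsplit : nbrF (a :: b :: t') s =
              (Finset.univ.filter (fun y => s(s, y) = s(a, b))) ∪ nbrF (b :: t') s := by
            ext y
            simp [mem_nbrF, ledges_cons_cons, List.mem_cons]
          by_cases hsa : s = a
          · subst hsa
            have h1 : (Finset.univ.filter (fun y => s(s, y) = s(s, b))) = {b} := by
              ext y; simp only [Finset.mem_filter, Finset.mem_univ, true_and,
                Finset.mem_singleton, Sym2.congr_right]
            have h2 : nbrF (b :: t') s = ∅ := nbrF_of_not_mem hanotin
            rw [hsplit, h1, h2, Finset.union_empty]
            exact ⟨by simp, fun _ _ => by simp⟩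
          · have hhead : ∀ h : (a :: b :: t') ≠ [], s ≠ (a :: b :: t').head h := by
              intro _ hc; exact hsa hc
            refine ⟨?_, fun h hs => absurd hs (hhead h)⟩
            by_cases hsb : s = b
            · subst hsb
              have h1 : (Finset.univ.filter (fun y => s(s, y) = s(a, s))) ⊆ {a} := by
                intro y hy
                simp only [Finset.mem_filter] at hy
                rcases Sym2.eq_iff.1 hy.2 with ⟨h1, h2⟩ | ⟨h1, h2⟩
                · exact absurd h1 hsa
                · simp [h2]
              rw [hsplit]
              refine le_trans (Finset.card_union_le _ _) ?_
              have hc1 := le_trans (Finset.card_le_card h1) (by simp : ({a} : Finset V).card ≤ 1)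
              have hc2 : (nbrF (s :: t') s).card ≤ 1 := (ih hnd' s).2 (by simp) rfl
              omega
            · have h1 : (Finset.univ.filter (fun y => s(s, y) = s(a, b))) = ∅ := by
                ext y
                simp only [Finset.mem_filter, Finset.notMem_empty, iff_false]
                rintro ⟨-, hy⟩
                rcases Sym2.eq_iff.1 hy with ⟨h1, _⟩ | ⟨h1, _⟩
                · exact hsa h1
                · exact hsb h1
              rw [hsplit, h1, Finset.empty_union]
              exact (ih hnd' s).1
end nbr

lemma getLast?_append_cons' (l₁ : List V) (v : V) {l₂ : List V} (h : l₂ ≠ []) :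
    (l₁ ++ v :: l₂).getLast? = some (l₂.getLast h) := by
  rw [List.getLast?_append_cons]
  cases l₂ with
  | nil => exact absurd rfl h
  | cons a t => rw [List.getLast?_cons_cons, List.getLast?_eq_getLast (by simp)]

lemma head?_append_cons (l₁ : List V) (v : V) (A B : List V) :
    (l₁ ++ v :: A).head? = (l₁ ++ v :: B).head? := by
  cases l₁ <;> simp

section posa
variable [DecidableEq V] [Fintype V]

/-- A path (as a list) in `H` through the pair `e`. -/
def IsEPath (H : SimpleGraph V) (e : Sym2 V) (l : List V) : Prop :=
  l.Chain' H.Adj ∧ l.Nodup ∧ e ∈ ledges l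

/-- One Pósa rotation preserving the pair `e`. -/
def RotStep (H : SimpleGraph V) (e : Sym2 V) (Q Q' : List V) : Prop :=
  ∃ (l₁ l₂ : List V) (v : V) (h2 : l₂ ≠ []),
    Q = l₁ ++ v :: l₂ ∧ Q' = l₁ ++ v :: l₂.reverse ∧
    H.Adj (l₂.getLast h2) v ∧ e ∈ ledges Q'

/-- Lists obtainable from `P` by a sequence of `e`-preserving Pósa rotations. -/
inductive Rot (H : SimpleGraph V) (e : Sym2 V) (P : List V) : List V → Prop
  | refl : Rot H e P P
  | step {Q Q' : List V} : Rot H e P Q → RotStep H e Q Q' → Rot H e P Q'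

variable {H : SimpleGraph V} {e : Sym2 V} {P : List V}

lemma RotStep.perm {Q Q' : List V} (h : RotStep H e Q Q') : Q'.Perm Q := by
  obtain ⟨l₁, l₂, v, h2, rfl, rfl, -, -⟩ := h
  exact ((l₂.reverse_perm.cons v).append_left l₁)

lemma Rot.perm {Q : List V} (h : Rot H e P Q) : Q.Perm P := by
  induction h with
  | refl => exact List.Perm.refl P
  | step _ hstep ih => exact hstep.perm.trans ih

lemma Rot.isEPath (hP : IsEPath H e P) {Q : List V} (h : Rot H e P Q) : IsEPath H e Q := by
  induction h with
  | refl => exact hP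
  | step hR hstep ih =>
      obtain ⟨l₁, l₂, v, h2, rfl, rfl, hadj, hmem⟩ := hstep
      refine ⟨chain'_rotation (fun _ _ h => h.symm) h2 ih.1 hadj, ?_, hmem⟩
      exact (Rot.step hR ⟨l₁, l₂, v, h2, rfl, rfl, hadj, hmem⟩).perm.symm.nodup hP.2.1

lemma Rot.head? {Q : List V} (h : Rot H e P Q) : Q.head? = P.head? := by
  induction h with
  | refl => rfl
  | step _ hstep ih =>
      obtain ⟨l₁, l₂, v, h2, rfl, rfl, -, -⟩ := hstep
      rw [← ih, head?_append_cons l₁ v l₂.reverse l₂]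

open Classical in
/-- Endpoints reachable by `e`-preserving rotations from `P`. -/
noncomputable def rotEnds (H : SimpleGraph V) (e : Sym2 V) (P : List V) : Finset V :=
  Finset.univ.filter (fun b => ∃ Q, Rot H e P Q ∧ Q.getLast? = some b)

lemma mem_rotEnds {b : V} :
    b ∈ rotEnds H e P ↔ ∃ Q, Rot H e P Q ∧ Q.getLast? = some b := by
  classical
  simp [rotEnds]

/-- P-neighbours of the rotation endpoints. -/
noncomputable def rotNbrs (H : SimpleGraph V) (e : Sym2 V) (P : List V) : Finset V :=
  (rotEnds H e P).biUnion (nbrF P)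

lemma rot_invariant (hP : IsEPath H e P) {Q : List V} (hQ : Rot H e P Q) :
    ∀ y, y ∉ rotEnds H e P → y ∉ rotNbrs H e P → nbrF Q y = nbrF P y := by
  induction hQ with
  | refl => intro y _ _; rfl
  | @step Q Q' hR hstep ih =>
      obtain ⟨l₁, l₂, v, h2, hQeq, hQ'eq, hadj, hmem⟩ := hstep
      intro y hyS hyNP
      set u := l₂.head h2 with hu
      set b := l₂.getLast h2 with hb
      have hbS : b ∈ rotEnds H e P :=
        mem_rotEnds.2 ⟨Q, hR, by rw [hQeq]; exact getLast?_append_cons' l₁ v h2⟩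
      have huS : u ∈ rotEnds H e P := by
        refine mem_rotEnds.2 ⟨Q', Rot.step hR ⟨l₁, l₂, v, h2, hQeq, hQ'eq, hadj, hmem⟩, ?_⟩
        rw [hQ'eq, getLast?_append_cons' l₁ v (by simpa using h2),
          Option.some_inj, List.getLast_reverse]
      have hyb : y ≠ b := fun h => hyS (h ▸ hbS)
      have hyu : y ≠ u := fun h => hyS (h ▸ huS)
      have hyv : y ≠ v := by
        intro h
        subst h
        have h1 : s(y, u) ∈ ledges Q := by
          rw [hQeq, mem_ledges_split h2]
          exact Or.inr (Or.inl rfl)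
        have h2' : u ∈ nbrF Q y := mem_nbrF.2 h1
        rw [ih y hyS hyNP] at h2'
        refine hyNP (Finset.mem_biUnion.2 ⟨u, huS, ?_⟩)
        rw [mem_nbrF, Sym2.eq_swap]
        exact mem_nbrF.1 h2'
      have key : nbrF Q' y = nbrF Q y := by
        ext z
        rw [mem_nbrF, mem_nbrF, hQeq, hQ'eq, mem_ledges_split h2, mem_ledges_split_rev h2]
        have nb : ¬ s(y, z) = s(v, b) := by
          intro hc
          rcases Sym2.eq_iff.1 hc with ⟨h1, -⟩ | ⟨h1, -⟩
          · exact hyv h1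
          · exact hyb h1
        have nu : ¬ s(y, z) = s(v, u) := by
          intro hc
          rcases Sym2.eq_iff.1 hc with ⟨h1, -⟩ | ⟨h1, -⟩
          · exact hyv h1
          · exact hyu h1
        tauto
      rw [key]
      exact ih y hyS hyNP

lemma rot_end_neighbors (hmax : ∀ l, IsEPath H e l → l.length ≤ P.length)
    (hP : IsEPath H e P) {Q : List V} {b : V} (hR : Rot H e P Q)
    (hb : Q.getLast? = some b) {y : V} (hadj : H.Adj b y) : y ∈ Q := by
  by_contra hy
  have hQP := hR.isEPath hP
  have hch : (Q ++ [y]).Chain' H.Adj := by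
    refine List.isChain_append.2 ⟨hQP.1, List.isChain_singleton y, ?_⟩
    intro x hx z hz
    rw [hb, Option.mem_some_iff] at hx
    simp only [List.head?_cons, Option.mem_some_iff] at hz
    subst hx; subst hz
    exact hadj
  have hep : IsEPath H e (Q ++ [y]) := by
    refine ⟨hch, ?_, mem_ledges_append_left [y] hQP.2.2⟩
    rw [List.nodup_append]
    exact ⟨hQP.2.1, List.nodup_singleton y, fun a ha b hb hab => hy (by rw [List.mem_singleton] at hb; subst hb; subst hab; exact ha)⟩
  have := hmax _ hep
  have hlen : Q.length = P.length := hR.perm.length_eq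
  simp only [List.length_append, List.length_singleton] at this
  omega

lemma rot_extNbhd_subset (hmax : ∀ l, IsEPath H e l → l.length ≤ P.length)
    (hP : IsEPath H e P) :
    extNbhd H ↑(rotEnds H e P) ⊆ ↑(rotNbrs H e P) ∪ {y | y ∈ e} := by
  rintro y ⟨hyS, s₀, hs₀, hadj⟩
  simp only [Finset.mem_coe] at hyS hs₀ ⊢
  by_cases hyNP : y ∈ rotNbrs H e P
  · exact Or.inl hyNP
  by_cases hye : y ∈ e
  · exact Or.inr hye
  exfalso
  obtain ⟨Q, hR, hlast⟩ := mem_rotEnds.1 hs₀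
  have hyQ : y ∈ Q := rot_end_neighbors hmax hP hR hlast hadj
  obtain ⟨q₁, q₂, hsplit⟩ := List.append_of_mem hyQ
  have h2 : q₂ ≠ [] := by
    rintro rfl
    apply hyS
    rw [hsplit, List.getLast?_concat, Option.some_inj] at hlast
    exact hlast ▸ hs₀
  have hs₀last : q₂.getLast h2 = s₀ := by
    rw [hsplit, getLast?_append_cons' q₁ y h2, Option.some_inj] at hlast
    exact hlast
  set u := q₂.head h2 with hu
  have hyne : ¬ e = s(y, u) := fun hc => hye (by rw [hc]; simp)
  have hmem' : e ∈ ledges (q₁ ++ y :: q₂.reverse) := by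
    rw [mem_ledges_split_rev h2]
    have := hP.2.2
    have heQ : e ∈ ledges Q := (hR.isEPath hP).2.2
    rw [hsplit, mem_ledges_split h2] at heQ
    rcases heQ with h | h | h
    · exact Or.inl h
    · exact absurd h hyne
    · exact Or.inr (Or.inr h)
  have hstep : RotStep H e Q (q₁ ++ y :: q₂.reverse) :=
    ⟨q₁, q₂, y, h2, hsplit, rfl, hs₀last ▸ hadj, hmem'⟩
  have huS : u ∈ rotEnds H e P := by
    refine mem_rotEnds.2 ⟨_, Rot.step hR hstep, ?_⟩
    rw [getLast?_append_cons' q₁ y (by simpa using h2), Option.some_inj, List.getLast_reverse]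
  have hyuQ : s(y, u) ∈ ledges Q := by
    rw [hsplit, mem_ledges_split h2]
    exact Or.inr (Or.inl rfl)
  have := rot_invariant hP hR y hyS hyNP
  have : u ∈ nbrF P y := by rw [← this]; exact mem_nbrF.2 hyuQ
  exact hyNP (Finset.mem_biUnion.2 ⟨u, huS, by rw [mem_nbrF, Sym2.eq_swap]; exact mem_nbrF.1 this⟩)

end posa

lemma extNbhd_mono {G G' : SimpleGraph V} (h : G ≤ G') (A : Set V) :
    extNbhd G A ⊆ extNbhd G' A := by
  rintro y ⟨hy, a, ha, hadj⟩
  exact ⟨hy, a, ha, h hadj⟩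

section card
variable [DecidableEq V] [Fintype V]

lemma mem_e_card (e : Sym2 V) : ({y : V | y ∈ e}).ncard ≤ 2 := by
  induction e using Sym2.ind with
  | _ a b =>
      have : {y : V | y ∈ s(a, b)} = {a, b} := by
        ext y; simp [Sym2.mem_iff]
      rw [this]
      exact le_trans (Set.ncard_insert_le _ _) (by simp)

lemma rotNbrs_card {H : SimpleGraph V} {e : Sym2 V} {P : List V} (hnd : P.Nodup) :
    (rotNbrs H e P).card ≤ 2 * (rotEnds H e P).card := by
  refine le_trans (Finset.card_biUnion_le) ?_
  have h : ∀ a ∈ rotEnds H e P, (nbrF P a).card ≤ 2 := fun a _ => (nbrF_card_le P hnd a).1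
  calc ∑ a ∈ rotEnds H e P, (nbrF P a).card ≤ (rotEnds H e P).card • 2 :=
        Finset.sum_le_card_nsmul _ _ 2 h
    _ = 2 * (rotEnds H e P).card := by rw [smul_eq_mul]; ring

lemma posa_card {G : SimpleGraph V} (hG : IsTenExpander G) {e : Sym2 V} {P : List V}
    (hmax : ∀ l, IsEPath (G ⊔ fromEdgeSet {e}) e l → l.length ≤ P.length)
    (hP : IsEPath (G ⊔ fromEdgeSet {e}) e P) :
    (Fintype.card V : ℝ) / 20 < ((rotEnds (G ⊔ fromEdgeSet {e}) e P).card : ℝ) := by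
  set H := G ⊔ fromEdgeSet {e} with hH
  set S := rotEnds H e P with hS
  have hPne : P ≠ [] := by
    intro hc
    have := hP.2.2
    rw [hc] at this
    simp at this
  have hSne : 1 ≤ S.card := by
    refine Finset.card_pos.2 ⟨P.getLast hPne, mem_rotEnds.2 ⟨P, Rot.refl, ?_⟩⟩
    rw [List.getLast?_eq_getLast hPne]
  by_contra hcon
  push_neg at hcon
  have hexp : 10 * (↑S : Set V).ncard ≤ (extNbhd G ↑S).ncard := by
    refine hG.2 _ ?_
    rwa [Set.ncard_coe_finset]
  rw [Set.ncard_coe_finset] at hexp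
  have h1 : (extNbhd G ↑S).ncard ≤ (extNbhd H ↑S).ncard :=
    Set.ncard_le_ncard (extNbhd_mono le_sup_left _) (Set.toFinite _)
  have h2 : (extNbhd H ↑S).ncard ≤ (↑(rotNbrs H e P) ∪ {y : V | y ∈ e} : Set V).ncard :=
    Set.ncard_le_ncard (rot_extNbhd_subset hmax hP) (Set.toFinite _)
  have h3 : (↑(rotNbrs H e P) ∪ {y : V | y ∈ e} : Set V).ncard ≤
      (rotNbrs H e P).card + 2 := by
    refine le_trans (Set.ncard_union_le _ _) ?_
    rw [Set.ncard_coe_finset]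
    exact Nat.add_le_add le_rfl (mem_e_card e)
  have h4 := rotNbrs_card (H := H) (e := e) hP.2.1
  rw [← hS] at h4
  omega

end card

section openpath
variable {r : V → V → Prop}

lemma chain'_prefix_concat {A B : List V} {v : V} (h : (A ++ v :: B).Chain' r) :
    (A ++ [v]).Chain' r := by
  obtain ⟨hA, hB, hj⟩ := List.isChain_append.1 h
  refine List.isChain_append.2 ⟨hA, List.isChain_singleton v, ?_⟩
  intro x hx z hz
  simp only [List.head?_cons, Option.mem_some_iff] at hz
  subst hz
  exact hj x hx v (by simp)

lemma openA (hr : Symmetric r) {q₁ q₂ : List V} {y x a b : V}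
    (hch : (q₁ ++ y :: q₂).Chain' r) (hnd : (q₁ ++ y :: q₂).Nodup)
    (hh : (q₁ ++ y :: q₂).head? = some a) (hl : (q₁ ++ y :: q₂).getLast? = some b)
    (hba : r b a) (hyx : r y x) (hx : x ∉ q₁ ++ y :: q₂) :
    (x :: y :: (q₁.reverse ++ q₂.reverse)).Chain' r ∧
      (x :: y :: (q₁.reverse ++ q₂.reverse)).Nodup ∧
      (x :: y :: (q₁.reverse ++ q₂.reverse)).length = (q₁ ++ y :: q₂).length + 1 ∧
      ∀ g ∈ ledges (q₁ ++ y :: q₂), (∀ h2 : q₂ ≠ [], g ≠ s(y, q₂.head h2)) →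
        g ∈ ledges (x :: y :: (q₁.reverse ++ q₂.reverse)) := by
  obtain ⟨hq₁, hyq₂, hj⟩ := List.isChain_append.1 hch
  have htailperm : (y :: (q₁.reverse ++ q₂.reverse)).Perm (q₁ ++ y :: q₂) := by
    refine List.Perm.trans ?_ List.perm_middle.symm
    exact List.Perm.cons y ((q₁.reverse_perm).append (q₂.reverse_perm))
  refine ⟨?_, ?_, by simp only [List.length_cons, List.length_append,
      List.length_reverse]; omega, ?_⟩
  · refine List.isChain_cons_cons.2 ⟨hr hyx, ?_⟩
    have hrew : y :: (q₁.reverse ++ q₂.reverse) = (q₂ ++ (q₁ ++ [y])).reverse := by simp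
    rw [hrew, List.isChain_reverse]
    refine chain'_flip_of_symm (fun u v h => hr h) ?_
    refine List.isChain_append.2 ⟨hyq₂.tail, chain'_prefix_concat hch, ?_⟩
    intro x' hx' y' hy'
    cases q₂ with
    | nil => simp at hx'
    | cons c t =>
        have hlq : (c :: t : List V).getLast? = some b := by
          rw [← List.getLast?_cons_cons (a := y), ← List.getLast?_append_cons]
          exact hl
        rw [hlq, Option.mem_some_iff] at hx'
        have hya : y' = a := by
          cases q₁ with
          | nil =>
              simp only [List.nil_append, List.head?_cons, Option.mem_some_iff,
                Option.some_inj] at hy' hh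
              rw [← hy']; exact hh
          | cons d t' =>
              simp only [List.cons_append, List.head?_cons, Option.mem_some_iff,
                Option.some_inj] at hy' hh
              rw [← hy']; exact hh
        rw [← hx', hya]
        exact hba
  · rw [List.nodup_cons]
    refine ⟨fun hc => hx (htailperm.subset hc), htailperm.symm.nodup hnd⟩
  · intro g hg hgne
    by_cases h2 : q₂ = []
    · subst h2
      have h1 : g ∈ ledges ((q₁ ++ [y]).reverse) := by
        rw [ledges_reverse, List.mem_reverse]; exact hg
      have hrev : (q₁ ++ [y]).reverse = y :: q₁.reverse := by simp
      rw [hrev] at h1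
      refine mem_ledges_cons ?_
      simpa using mem_ledges_append_left (List.reverse ([] : List V)) h1
    · rw [mem_ledges_split h2] at hg
      rcases hg with h | h | h
      · have h1 : g ∈ ledges ((q₁ ++ [y]).reverse) := by
          rw [ledges_reverse, List.mem_reverse]; exact h
        have hrev : (q₁ ++ [y]).reverse = y :: q₁.reverse := by simp
        rw [hrev] at h1
        refine mem_ledges_cons ?_
        simpa using mem_ledges_append_left q₂.reverse h1
      · exact absurd h (hgne h2)
      · have h1 : g ∈ ledges q₂.reverse := by rw [ledges_reverse, List.mem_reverse]; exact h
        refine mem_ledges_cons ?_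
        simpa using mem_ledges_append_right (y :: q₁.reverse) h1

lemma openB (hr : Symmetric r) {q₁ q₂ : List V} {y x a b : V}
    (hch : (q₁ ++ y :: q₂).Chain' r) (hnd : (q₁ ++ y :: q₂).Nodup)
    (hh : (q₁ ++ y :: q₂).head? = some a) (hl : (q₁ ++ y :: q₂).getLast? = some b)
    (hba : r b a) (hyx : r y x) (hx : x ∉ q₁ ++ y :: q₂) :
    (x :: y :: (q₂ ++ q₁)).Chain' r ∧
      (x :: y :: (q₂ ++ q₁)).Nodup ∧
      (x :: y :: (q₂ ++ q₁)).length = (q₁ ++ y :: q₂).length + 1 ∧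
      ∀ g ∈ ledges (q₁ ++ y :: q₂), (∀ h1 : q₁ ≠ [], g ≠ s(q₁.getLast h1, y)) →
        g ∈ ledges (x :: y :: (q₂ ++ q₁)) := by
  obtain ⟨hq₁, hyq₂, hj⟩ := List.isChain_append.1 hch
  have htailperm : (y :: (q₂ ++ q₁)).Perm (q₁ ++ y :: q₂) := by
    refine List.Perm.trans ?_ List.perm_middle.symm
    exact List.Perm.cons y List.perm_append_comm
  refine ⟨?_, ?_, by simp only [List.length_cons, List.length_append]; omega, ?_⟩
  · refine List.isChain_cons_cons.2 ⟨hr hyx, ?_⟩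
    have hrew : y :: (q₂ ++ q₁) = (y :: q₂) ++ q₁ := by simp
    rw [hrew]
    refine List.isChain_append.2 ⟨hyq₂, hq₁, ?_⟩
    intro x' hx' y' hy'
    have hxb : x' = b := by
      have hlq : (y :: q₂).getLast? = some b := by
        rw [← List.getLast?_append_cons (l₁ := q₁)]
        exact hl
      rw [hlq, Option.mem_some_iff] at hx'
      exact hx'.symm
    cases q₁ with
    | nil => simp at hy'
    | cons d t' =>
        simp only [List.head?_cons, Option.mem_some_iff] at hy'
        simp only [List.cons_append, List.head?_cons, Option.some_inj] at hh
        rw [hxb, ← hy', hh]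
        exact hba
  · rw [List.nodup_cons]
    refine ⟨fun hc => hx (htailperm.subset hc), htailperm.symm.nodup hnd⟩
  · intro g hg hgne
    have hLB : (x :: y :: (q₂ ++ q₁)) = x :: ((y :: q₂) ++ q₁) := by simp
    by_cases h1 : q₁ = []
    · subst h1
      simp only [List.nil_append] at hg
      rw [hLB]
      exact mem_ledges_cons (mem_ledges_append_left _ hg)
    · have hgsplit : g ∈ ledges (q₁ ++ [y]) ∨ g ∈ ledges (y :: q₂) := by
        rw [ledges_append_cons] at hg
        rcases List.mem_append.1 hg with h | h
        · exact Or.inl h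
        · exact Or.inr h
      rw [hLB]
      rcases hgsplit with h | h
      · rw [ledges_concat h1] at h
        rcases List.mem_append.1 h with h | h
        · exact mem_ledges_cons (mem_ledges_append_right _ h)
        · simp only [List.mem_singleton] at h
          exact absurd h (hgne h1)
      · exact mem_ledges_cons (mem_ledges_append_left _ h)

end openpath

lemma two_le_length_of_mem_ledges {g : Sym2 V} : ∀ {l : List V}, g ∈ ledges l → 2 ≤ l.length
  | [], h => by simp at h
  | [_], h => by simp at h
  | _ :: _ :: _, _ => by simp only [List.length_cons]; omega

lemma mem_ledges_iff {g : Sym2 V} : ∀ {l : List V},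
    g ∈ ledges l ↔ ∃ i, ∃ h : i + 1 < l.length, g = s(l[i], l[i + 1])
  | [] => by simp
  | [a] => by simp
  | a :: b :: t => by
      rw [ledges_cons_cons, List.mem_cons, mem_ledges_iff (l := b :: t)]
      constructor
      · rintro (h | ⟨i, hi, h⟩)
        · exact ⟨0, by simp only [List.length_cons]; omega, by simpa using h⟩
        · exact ⟨i + 1, by simp only [List.length_cons] at hi ⊢; omega, by simpa using h⟩
      · rintro ⟨i, hi, h⟩
        cases i with
        | zero => exact Or.inl (by simpa using h)
        | succ j =>
            refine Or.inr ⟨j, by simp only [List.length_cons] at hi ⊢; omega, by simpa using h⟩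

lemma head_ne_getLast {l : List V} (hnd : l.Nodup) (h2 : 2 ≤ l.length) (h : l ≠ []) :
    l.head h ≠ l.getLast h := by
  rw [List.head_eq_getElem, List.getLast_eq_getElem]
  intro hc
  have := (hnd.getElem_inj_iff).1 hc
  omega

section boost
variable [DecidableEq V] [Fintype V]

lemma boost {G : SimpleGraph V} {e : Sym2 V} (hcard : 3 ≤ Fintype.card V)
    (hconn : (G ⊔ fromEdgeSet {e}).Connected)
    {P Q : List V} (hmax : ∀ l, IsEPath (G ⊔ fromEdgeSet {e}) e l → l.length ≤ P.length)
    (hQ : IsEPath (G ⊔ fromEdgeSet {e}) e Q) (hlen : Q.length = P.length)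
    {a b : V} (hhead : Q.head? = some a) (hlast : Q.getLast? = some b) :
    ¬ (s(a, b)).IsDiag ∧ IsBooster G e s(a, b) := by
  set H := G ⊔ fromEdgeSet {e} with hH
  have hQne : Q ≠ [] := by rintro rfl; simp at hhead
  have h2Q : 2 ≤ Q.length := two_le_length_of_mem_ledges hQ.2.2
  have hhead' : Q.head hQne = a := by
    rw [← Option.some_inj, ← List.head?_eq_head]; exact hhead
  have hlast' : Q.getLast hQne = b := by
    rw [← Option.some_inj, ← List.getLast?_eq_getLast hQne]; exact hlast
  have hab : a ≠ b := by
    rw [← hhead', ← hlast']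
    exact head_ne_getLast hQ.2.1 h2Q hQne
  set f := s(a, b) with hf
  have hdiag : ¬ f.IsDiag := by rw [hf]; simpa using hab
  set H' := G ⊔ fromEdgeSet {e, f} with hH'
  have hHH' : H ≤ H' := sup_le_sup_left (fromEdgeSet_mono (by simp)) G
  have hchQ' : Q.Chain' H'.Adj := hQ.1.imp fun _ _ hadj => hHH' hadj
  have hfadj : H'.Adj b a := by
    refine Or.inr ⟨?_, hab.symm⟩
    simp [hf, Sym2.eq_swap]
  refine ⟨hdiag, ?_⟩
  rcases eq_or_lt_of_le (hQ.2.1.length_le_card) with hfull | hmiss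
  · -- Hamilton cycle case
    right
    obtain ⟨x₀, y₀, w, hw⟩ := exists_walk_of_chain Q hchQ' hQne
    have hx₀ : x₀ = a := by rw [← hhead']; exact (head_of_support_eq hw hQne).symm
    have hy₀ : y₀ = b := by rw [← hlast']; exact (getLast_of_support_eq hw hQne).symm
    have hx₀' : a = x₀ := hx₀.symm
    subst hx₀'
    have hy₀' : b = y₀ := hy₀.symm
    subst hy₀'
    have hwedges : w.edges = ledges Q := by rw [walk_edges_eq_ledges, hw]
    set c := w.concat hfadj with hc
    have hcsupp : c.support = Q ++ [a] := by
      rw [hc, SimpleGraph.Walk.support_concat, hw]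
    have hcedges : c.edges = ledges Q ++ [s(b, a)] := by
      rw [hc, SimpleGraph.Walk.edges_concat, hwedges, List.concat_eq_append]
    have hQcons : Q = a :: Q.tail := List.eq_cons_of_mem_head? (by rw [hhead]; rfl)
    have hmemQ : ∀ v : V, v ∈ Q := by
      intro v
      have h1 : Q.toFinset.card = Fintype.card V := by
        rw [List.toFinset_card_of_nodup hQ.2.1, hfull]
      have := Finset.eq_univ_of_card _ h1
      rw [← List.mem_toFinset, this]
      exact Finset.mem_univ v
    have hbafresh : s(b, a) ∉ ledges Q := by
      intro hmem
      obtain ⟨i, hi, hgi⟩ := mem_ledges_iff.1 hmem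
      have h0 : Q[0] = a := by rw [← List.head_eq_getElem hQne]; exact hhead'
      have hN : Q[Q.length - 1] = b := by
        rw [← List.getLast_eq_getElem hQne]; exact hlast'
      rcases Sym2.eq_iff.1 hgi.symm with ⟨h1, h2⟩ | ⟨h1, h2⟩
      · -- Q[i] = b, Q[i+1] = a
        have : Q[i + 1] = Q[0] := by rw [h2, h0]
        have := hQ.2.1.getElem_inj_iff.1 this
        omega
      · -- Q[i] = a, Q[i+1] = b
        have e1 : Q[i] = Q[0] := by rw [h1, h0]
        have e2 : i = 0 := hQ.2.1.getElem_inj_iff.1 e1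
        have e3 : Q[i + 1] = Q[Q.length - 1] := by
          rw [h2, hN]
        have e4 : i + 1 = Q.length - 1 := hQ.2.1.getElem_inj_iff.1 e3
        rw [hfull] at *
        omega
    have hctrail : c.IsTrail := by
      constructor
      rw [hcedges]
      refine List.Nodup.append ?_ (List.nodup_singleton _) ?_
      · rw [← hwedges]
        have hwpath : w.IsPath := (Walk.isPath_def w).2 (by rw [hw]; exact hQ.2.1)
        exact hwpath.edges_nodup
      · intro g hg hg'
        rw [List.mem_singleton] at hg'
        exact hbafresh (hg' ▸ hg)
    have hcnenil : ¬ c = Walk.nil := by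
      intro hnil
      have := hcsupp
      rw [hnil] at this
      simp only [Walk.support_nil] at this
      have : Q.length + 1 = 1 := by
        have := congrArg List.length this
        simpa using this
      omega
    have hcycle : c.IsCycle := by
      refine ⟨⟨hctrail, hcnenil⟩, ?_⟩
      have : c.support.tail = Q.tail ++ [a] := by
        rw [hcsupp, hQcons]
        simp
      rw [this, List.nodup_append]
      have hQtl : Q.tail.Nodup := hQ.2.1.tail
      refine ⟨hQtl, List.nodup_singleton _, ?_⟩
      intro z hz z' hz' hzz
      rw [List.mem_singleton] at hz'
      rw [hzz, hz'] at hz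
      have ha : a ∉ Q.tail := by
        have h' := hQ.2.1
        rw [hQcons] at h'
        exact (List.nodup_cons.1 h').1
      exact ha hz
    refine ⟨a, c, ⟨hcycle, ?_⟩, ?_⟩
    · -- hamiltonian tail
      intro v
      have hsupp : c.tail.support = c.support.tail :=
        Walk.support_tail_of_not_nil c hcycle.not_nil
      rw [hsupp, hcsupp, hQcons]
      simp only [List.cons_append, List.tail_cons]
      have hperm : (Q.tail ++ [a]).Perm (a :: Q.tail) := List.perm_append_singleton _ _
      rw [hperm.count_eq, ← hQcons]
      exact List.count_eq_one_of_mem hQ.2.1 (hmemQ v)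
    · rw [hcedges]
      exact List.mem_append.2 (Or.inl hQ.2.2)
  · -- longer path case
    left
    have finish : ∀ l : List V, l.Chain' H'.Adj → l.Nodup → e ∈ ledges l →
        l.length = Q.length + 1 →
        (∃ (u v : V) (w : (G ⊔ fromEdgeSet {e, f}).Walk u v), w.IsPath ∧ e ∈ w.edges ∧
          ∀ (x y : V) (w' : (G ⊔ fromEdgeSet {e}).Walk x y),
            w'.IsPath → e ∈ w'.edges → w'.length < w.length) := by
      intro l hch hnd hel hlenl
      have hlne : l ≠ [] := by
        intro hc; rw [hc] at hlenl; simp at hlenl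
      obtain ⟨u, v, w, hw⟩ := exists_walk_of_chain l hch hlne
      refine ⟨u, v, w, (Walk.isPath_def w).2 (by rw [hw]; exact hnd),
        by rw [walk_edges_eq_ledges, hw]; exact hel, ?_⟩
      intro x y w' hw' hew'
      have hsup : IsEPath H e w'.support :=
        ⟨w'.isChain_adj_support, (Walk.isPath_def _).1 hw',
          by rw [← walk_edges_eq_ledges]; exact hew'⟩
      have h1 := hmax _ hsup
      rw [Walk.length_support] at h1
      have h2 : w.support.length = l.length := by rw [hw]
      rw [Walk.length_support] at h2
      omega
    have haQ : a ∈ Q := by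
      rw [← hhead']; exact Q.head_mem hQne
    have hx₁ : ∃ x : V, x ∉ Q := by
      by_contra hc
      push_neg at hc
      have h1 : (Finset.univ : Finset V) ⊆ Q.toFinset := fun v _ => List.mem_toFinset.2 (hc v)
      have h2 := Finset.card_le_card h1
      rw [Finset.card_univ, List.toFinset_card_of_nodup hQ.2.1] at h2
      omega
    obtain ⟨x₁, hx₁⟩ := hx₁
    obtain ⟨p⟩ := hconn.preconnected a x₁
    obtain ⟨d, hd, hdfst, hdsnd⟩ := p.exists_boundary_dart {v | v ∈ Q} haQ hx₁
    rw [Set.mem_setOf_eq] at hdfst hdsnd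
    obtain ⟨q₁, q₂, hsplit⟩ := List.append_of_mem hdfst
    rw [hsplit] at hchQ' hhead hlast hdsnd
    have hndQ : (q₁ ++ d.fst :: q₂).Nodup := by rw [← hsplit]; exact hQ.2.1
    have heQ : e ∈ ledges (q₁ ++ d.fst :: q₂) := by rw [← hsplit]; exact hQ.2.2
    have hyx : H'.Adj d.fst d.snd := hHH' d.adj
    have hlenQ : (q₁ ++ d.fst :: q₂).length = Q.length := by rw [← hsplit]
    by_cases hcaseA : ∀ h2 : q₂ ≠ [], e ≠ s(d.fst, q₂.head h2)
    · obtain ⟨hch, hnd, hlenl, hsub⟩ :=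
        openA (fun u v h => h.symm) hchQ' hndQ hhead hlast hfadj hyx hdsnd
      exact finish _ hch hnd (hsub e heQ hcaseA) (by omega)
    · push_neg at hcaseA
      obtain ⟨h2, he2⟩ := hcaseA
      have hEB : ∀ h1 : q₁ ≠ [], e ≠ s(q₁.getLast h1, d.fst) := by
        intro h1 hc
        rw [he2] at hc
        have hyq₂ : d.fst ∉ q₂ := by
          have := hndQ.of_append_right
          exact (List.nodup_cons.1 this).1
        have hdisj : List.Disjoint q₁ (d.fst :: q₂) := List.disjoint_of_nodup_append hndQ
        rcases Sym2.eq_iff.1 hc with ⟨hc1, hc2⟩ | ⟨hc1, hc2⟩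
        · exact hyq₂ (hc2 ▸ q₂.head_mem h2)
        · refine hdisj (q₁.getLast_mem h1) ?_
          exact List.mem_cons_of_mem _ (hc2 ▸ q₂.head_mem h2)
      obtain ⟨hch, hnd, hlenl, hsub⟩ :=
        openB (fun u v h => h.symm) hchQ' hndQ hhead hlast hfadj hyx hdsnd
      exact finish _ hch hnd (hsub e heQ hEB) (by omega)

end boost

theorem stmt1 (n : ℕ) (hn : 3 ≤ n) (G : SimpleGraph (Fin n)) (hG : IsTenExpander G)
    (e : Sym2 (Fin n)) (he : ¬ e.IsDiag) :
    (n : ℝ) ^ 2 / 10 ^ 4 ≤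
      ({f : Sym2 (Fin n) | ¬ f.IsDiag ∧ IsBooster G e f}).ncard := by
  classical
  revert he
  induction e using Sym2.ind with
  | _ u₀ v₀ =>
  intro he
  set e : Sym2 (Fin n) := s(u₀, v₀) with hedef
  have hne : u₀ ≠ v₀ := by rw [hedef] at he; simpa using he
  set H := G ⊔ fromEdgeSet {e} with hHdef
  have hcardV : Fintype.card (Fin n) = n := Fintype.card_fin n
  have hconn : H.Connected := hG.1.mono le_sup_left
  have hadj : H.Adj u₀ v₀ := Or.inr ⟨by rw [hedef]; simp, hne⟩
  have hbase : IsEPath H e [u₀, v₀] :=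
    ⟨List.isChain_pair.2 hadj, by simp [hne], by rw [hedef]; simp⟩
  have hbdd : ∀ l, IsEPath H e l → l.length ≤ n := by
    intro l hl
    have := hl.2.1.length_le_card
    rwa [hcardV] at this
  -- maximal length
  set pred : ℕ → Prop := fun k => ∃ l, IsEPath H e l ∧ l.length = k with hpred
  set k₀ := Nat.findGreatest pred n with hk₀
  have hpred2 : pred 2 := ⟨[u₀, v₀], hbase, rfl⟩
  have hk₀spec : pred k₀ := Nat.findGreatest_spec (le_trans (by norm_num) hn) hpred2
  obtain ⟨P, hP, hPlen⟩ := hk₀spec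
  have hmax : ∀ l, IsEPath H e l → l.length ≤ P.length := by
    intro l hl
    rw [hPlen]
    by_contra hc
    push_neg at hc
    exact Nat.findGreatest_is_greatest hc (hbdd l hl) ⟨l, hl, rfl⟩
  -- first rotation set
  set S := rotEnds H e P with hSdef
  have hScard : (n : ℝ) / 20 < S.card := by
    have := posa_card hG hmax hP
    rwa [hcardV] at this
  -- second rotation sets
  have hTspec : ∀ b ∈ S, ∃ T : Finset (Fin n), (n : ℝ) / 20 < T.card ∧
      ∀ a ∈ T, ¬ (s(b, a)).IsDiag ∧ IsBooster G e s(b, a) := by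
    intro b hb
    obtain ⟨Qb, hRb, hQblast⟩ := mem_rotEnds.1 hb
    have hQb : IsEPath H e Qb := hRb.isEPath hP
    have hQblen : Qb.length = P.length := hRb.perm.length_eq
    set P' := Qb.reverse with hP'def
    have hP' : IsEPath H e P' := by
      refine ⟨List.isChain_reverse.2 (chain'_flip_of_symm (fun x y h => h.symm) hQb.1), ?_, ?_⟩
      · rw [hP'def, List.nodup_reverse]; exact hQb.2.1
      · rw [hP'def, ledges_reverse, List.mem_reverse]; exact hQb.2.2
    have hP'len : P'.length = P.length := by
      rw [hP'def, List.length_reverse]; exact hQblen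
    have hmax' : ∀ l, IsEPath H e l → l.length ≤ P'.length := by
      intro l hl; rw [hP'len]; exact hmax l hl
    refine ⟨rotEnds H e P', ?_, ?_⟩
    · have := posa_card hG hmax' hP'
      rwa [hcardV] at this
    · intro a ha
      obtain ⟨Q', hR', hQ'last⟩ := mem_rotEnds.1 ha
      have hQ' : IsEPath H e Q' := hR'.isEPath hP'
      have hQ'len : Q'.length = P.length := by rw [hR'.perm.length_eq]; exact hP'len
      have hQ'head : Q'.head? = some b := by
        rw [hR'.head?, hP'def, List.head?_reverse]; exact hQblast
      have hcard3 : 3 ≤ Fintype.card (Fin n) := by rw [hcardV]; exact hn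
      exact boost hcard3 hconn hmax hQ' hQ'len hQ'head hQ'last
  choose T hT1 hT2 using hTspec
  -- counting
  set T' : Fin n → Finset (Fin n) := fun b => if h : b ∈ S then T b h else ∅ with hT'def
  set U : Finset (Fin n × Fin n) :=
    S.biUnion (fun b => (T' b).image (fun a => (b, a))) with hUdef
  have hUcard : ∀ b ∈ S, ((T' b).image (fun a => (b, a))).card = (T' b).card := by
    intro b hb
    exact Finset.card_image_of_injective _ (fun x y hxy => (Prod.mk.injEq _ _ _ _ ▸ hxy).2)
  have hUdisj : ∀ b₁ ∈ S, ∀ b₂ ∈ S, b₁ ≠ b₂ →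
      Disjoint ((T' b₁).image (fun a => (b₁, a))) ((T' b₂).image (fun a => (b₂, a))) := by
    intro b₁ _ b₂ _ hne'
    rw [Finset.disjoint_left]
    intro x hx1 hx2
    obtain ⟨a₁, -, rfl⟩ := Finset.mem_image.1 hx1
    obtain ⟨a₂, -, hx⟩ := Finset.mem_image.1 hx2
    exact hne' ((Prod.mk.injEq _ _ _ _ ▸ hx.symm).1)
  have hUcardeq : U.card = ∑ b ∈ S, (T' b).card := by
    rw [hUdef, Finset.card_biUnion hUdisj]
    exact Finset.sum_congr rfl hUcard
  set t : ℝ := (n : ℝ) / 20 with htdef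
  have hn0 : (0 : ℝ) < n := by
    have : (3 : ℝ) ≤ n := by exact_mod_cast hn
    linarith
  have ht0 : 0 < t := by rw [htdef]; positivity
  have hUreal : t * t ≤ (U.card : ℝ) := by
    have h1 : ∀ b ∈ S, t ≤ ((T' b).card : ℝ) := by
      intro b hb
      rw [hT'def]
      simp only [dif_pos hb]
      exact le_of_lt (hT1 b hb)
    have h2 : (S.card : ℝ) • t ≤ ∑ b ∈ S, ((T' b).card : ℝ) := by
      have := Finset.card_nsmul_le_sum S (fun b => ((T' b).card : ℝ)) t h1
      rw [← Nat.cast_smul_eq_nsmul ℝ] at this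
      exact this
    rw [smul_eq_mul] at h2
    have h3 : (U.card : ℝ) = ∑ b ∈ S, ((T' b).card : ℝ) := by
      rw [hUcardeq]
      push_cast
      rfl
    rw [h3]
    refine le_trans ?_ h2
    exact mul_le_mul_of_nonneg_right (le_of_lt hScard) (le_of_lt ht0)
  set B : Finset (Sym2 (Fin n)) := U.image (fun p => s(p.1, p.2)) with hBdef
  have hUB : U.card ≤ 2 * B.card := by
    refine Finset.card_le_mul_card_image U 2 ?_
    intro g hg
    induction g using Sym2.ind with
    | _ p q =>
        refine le_trans (Finset.card_le_card (s := U.filter (fun a => s(a.1, a.2) = s(p, q)))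
          (t := ({(p, q), (q, p)} : Finset (Fin n × Fin n))) ?_) ?_
        · intro x hx
          obtain ⟨-, hxeq⟩ := Finset.mem_filter.1 hx
          rcases Sym2.eq_iff.1 hxeq with ⟨h1, h2⟩ | ⟨h1, h2⟩
          · exact Finset.mem_insert.2 (Or.inl (Prod.ext h1 h2))
          · refine Finset.mem_insert.2 (Or.inr ?_)
            rw [Finset.mem_singleton]
            exact Prod.ext h1 h2
        · exact le_trans (Finset.card_insert_le _ _) (by simp)
  set BF : Finset (Sym2 (Fin n)) :=
    Finset.univ.filter (fun f => ¬ f.IsDiag ∧ IsBooster G e f) with hBFdef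
  have hBsub : B ⊆ BF := by
    intro g hg
    obtain ⟨⟨b, a⟩, hmem, rfl⟩ := Finset.mem_image.1 hg
    obtain ⟨b', hb'S, himg⟩ := Finset.mem_biUnion.1 hmem
    obtain ⟨a', ha', heq⟩ := Finset.mem_image.1 himg
    have hb : b' = b := (Prod.mk.injEq _ _ _ _ ▸ heq).1
    have ha : a' = a := (Prod.mk.injEq _ _ _ _ ▸ heq).2
    subst hb; subst ha
    have haT : a' ∈ T b' hb'S := by
      rw [hT'def] at ha'
      simpa [dif_pos hb'S] using ha'
    obtain ⟨hdiag, hboost⟩ := hT2 b' hb'S a' haT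
    rw [hBFdef, Finset.mem_filter]
    exact ⟨Finset.mem_univ _, hdiag, hboost⟩
  have hseteq : {f : Sym2 (Fin n) | ¬ f.IsDiag ∧ IsBooster G e f} = ↑BF := by
    ext g
    rw [hBFdef]
    simp
  rw [hseteq, Set.ncard_coe_finset]
  have hBF : (B.card : ℝ) ≤ BF.card := by exact_mod_cast Finset.card_le_card hBsub
  have hUB' : (U.card : ℝ) ≤ 2 * B.card := by exact_mod_cast hUB
  have htt : t * t = (n : ℝ) ^ 2 / 400 := by rw [htdef]; ring
  rw [htt] at hUreal
  nlinarith [sq_nonneg ((n : ℝ))]
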